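/- Let d, B, b be real numbers with d ≥ 1, B ≥ 2, and b ≥ B. Set p = 1 − (1/(2e))·(1/(2d))^{1/(B−1)} and let δ be defined by (1+δ)·(1−p)·b = b − 1, where e is Euler's number. Then ( e^δ / (1+δ)^{1+δ} )^{(1−p)·b} ≤ 1/(2d). -/

import Mathlib

/-- The Chernoff-tail computation in the proof of Theorem 5 of the paper
(known parameters). -/
theorem chernoff_tail_known (d B b : ℝ) (hd : 1 ≤ d) (hB : 2 ≤ B) (hb : B ≤ b)
    (p δ : ℝ) (hp : p = 1 - 1 / (2 * Real.exp 1) * (1 / (2 * d)) ^ (1 / (B - 1)))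
    (hδ : (1 + δ) * (1 - p) * b = b - 1) :
    (Real.exp δ / (1 + δ) ^ (1 + δ)) ^ ((1 - p) * b) ≤ 1 / (2 * d) := by
  have he : (0:ℝ) < Real.exp 1 := Real.exp_pos 1
  have hd0 : (0:ℝ) < 2 * d := by linarith
  set r : ℝ := (1 / (2 * d)) ^ (1 / (B - 1)) with hr
  have hrpos : 0 < r := Real.rpow_pos_of_pos (by positivity) _
  set q : ℝ := 1 / (2 * Real.exp 1) * r with hqdef
  have hq : 1 - p = q := by rw [hp]; ring
  have hqpos : 0 < q := by positivity
  have hb2 : (2:ℝ) ≤ b := le_trans hB hb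
  have hb1 : (0:ℝ) < b - 1 := by linarith
  have hbpos : (0:ℝ) < b := by linarith
  have hδ' : (1 + δ) * (q * b) = b - 1 := by rw [← hq, ← mul_assoc]; exact hδ
  have h1δ : 1 + δ = (b - 1) / (q * b) := by
    field_simp
    linarith [hδ']
  have hδpos : 0 < 1 + δ := by rw [h1δ]; positivity
  -- rewrite LHS
  have hLHS : (Real.exp δ / (1 + δ) ^ (1 + δ)) ^ ((1 - p) * b)
      = Real.exp (δ * (q * b)) / (1 + δ) ^ (b - 1) := by
    rw [hq, Real.div_rpow (Real.exp_pos δ).le (Real.rpow_nonneg hδpos.le _),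
      ← Real.exp_mul, ← Real.rpow_mul hδpos.le, hδ']
  rw [hLHS]
  have hexp : Real.exp (δ * (q * b)) ≤ Real.exp (b - 1) := by
    apply Real.exp_le_exp.2
    nlinarith [hδ', mul_pos hqpos hbpos]
  have hppos : 0 < (1 + δ) ^ (b - 1) := Real.rpow_pos_of_pos hδpos _
  refine le_trans (by gcongr : Real.exp (δ * (q * b)) / (1 + δ) ^ (b - 1) ≤ Real.exp (b-1) / (1 + δ) ^ (b - 1)) ?_
  have key : Real.exp (b - 1) / (1 + δ) ^ (b - 1)
      = (Real.exp 1 * (q * b / (b - 1))) ^ (b - 1) := by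
    rw [h1δ, (inv_div (q * b) (b - 1)).symm,
      Real.inv_rpow (by positivity), div_eq_mul_inv, inv_inv, ← Real.exp_one_rpow (b - 1),
      ← Real.mul_rpow he.le (by positivity)]
  rw [key]
  have heq : Real.exp 1 * q = r / 2 := by
    rw [hqdef]; field_simp
  have hc : Real.exp 1 * (q * b / (b - 1)) ≤ r := by
    have hform : Real.exp 1 * (q * b / (b - 1)) = Real.exp 1 * q * b / (b - 1) := by ring
    rw [hform, heq, div_le_iff₀ hb1]
    nlinarith [hrpos]
  have step2 : (Real.exp 1 * (q * b / (b - 1))) ^ (b - 1) ≤ r ^ (b - 1) :=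
    Real.rpow_le_rpow (by positivity) hc hb1.le
  refine le_trans step2 ?_
  rw [hr, ← Real.rpow_mul (by positivity)]
  have h2d : 1 / (2 * d) ≤ 1 := by
    rw [div_le_one hd0]; linarith
  calc (1 / (2 * d)) ^ (1 / (B - 1) * (b - 1))
      ≤ (1 / (2 * d)) ^ (1:ℝ) := by
        apply Real.rpow_le_rpow_of_exponent_ge (by positivity) h2d
        have hB1 : (0:ℝ) < B - 1 := by linarith
        have hform2 : 1 / (B - 1) * (b - 1) = (b - 1) / (B - 1) := by ring
        rw [hform2, le_div_iff₀ hB1]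
        linarith
    _ = 1 / (2 * d) := Real.rpow_one _
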